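/- Fix positive integers K_r, K_t, M_r, N_t and κ_t with 1 ≤ κ_t < K_t, and suppose N_t ≤ K_r M_r. Then for Lebesgue-almost every choice of the matrices H_{jk} ∈ ℂ^{M_r × N_t} (j = 1,…,K_r, k = 1,…,K_t) and the scalars γ^j_{ik} ∈ ℂ (i = 1,…,K_t − κ_t, j = 1,…,K_r, k = 1,…,K_t), the coefficient matrix C has full rank, i.e., rank(C) = min( K_r (K_t − κ_t) M_r , K_t N_t ). -/

import Mathlib

open MeasureTheory

/-- The coefficient matrix `C`: the `K_r (K_t − κ_t) M_r × K_t N_t` block matrix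
whose block rows are indexed by pairs `(j, i)` and block columns by `k`, with
the `((j,i), k)` block equal to `γ^j_{ik} H_{jk}`. -/
def coefMatrix (Kr Kt κt Mr Nt : ℕ)
    (H : Fin Kr → Fin Kt → Matrix (Fin Mr) (Fin Nt) ℂ)
    (γ : Fin Kr → Fin (Kt - κt) → Fin Kt → ℂ) :
    Matrix ((Fin Kr × Fin (Kt - κt)) × Fin Mr) (Fin Kt × Fin Nt) ℂ :=
  Matrix.of fun ri cj => γ ri.1.1 ri.1.2 cj.1 * H ri.1.1 cj.1 ri.2 cj.2

namespace Stmt6Aux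

open Matrix

/-! ### Measurability of polynomial evaluation -/

lemma measurable_eval {σ : Type*} (P : MvPolynomial σ ℂ) :
    Measurable fun y : σ → ℂ => MvPolynomial.eval y P := by
  induction P using MvPolynomial.induction_on with
  | C a => simp only [MvPolynomial.eval_C]; exact measurable_const
  | add p q hp hq => simp only [map_add]; exact hp.add hq
  | mul_X p i hp =>
    simp only [map_mul, MvPolynomial.eval_X]; exact hp.mul (measurable_pi_apply i)

/-- Transfer an a.e. property backwards through a measure preserving map. -/
lemma mp_ae_comp {X Y : Type*} [MeasurableSpace X] [MeasurableSpace Y]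
    {μ : Measure X} {ν : Measure Y} {f : X → Y} (hf : MeasurePreserving f μ ν)
    {p : Y → Prop} (hp : MeasurableSet {y | p y}) (h : ∀ᵐ y ∂ν, p y) :
    ∀ᵐ x ∂μ, p (f x) := by
  rw [Filter.eventually_iff, mem_ae_iff] at h ⊢
  have hset : {x | p (f x)}ᶜ = f ⁻¹' ({y | p y}ᶜ) := rfl
  rw [hset, ← Measure.map_apply hf.measurable hp.compl, hf.map_eq]
  exact h

/-! ### A nonzero multivariate polynomial over `ℂ` is a.e. nonzero -/

lemma ae_ne_zero_fin : ∀ (n : ℕ) (P : MvPolynomial (Fin n) ℂ), P ≠ 0 →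
    ∀ᵐ y : Fin n → ℂ ∂volume, MvPolynomial.eval y P ≠ 0 := by
  intro n
  induction n with
  | zero =>
    intro P hP
    obtain ⟨a, rfl⟩ := MvPolynomial.C_surjective (Fin 0) P
    have ha : a ≠ 0 := fun h => hP (by simp [h])
    filter_upwards with y
    simpa using ha
  | succ n ih =>
    intro P hP
    set Q : Polynomial (MvPolynomial (Fin n) ℂ) := MvPolynomial.finSuccEquiv ℂ n P with hQdef
    have hQ : Q ≠ 0 := by
      rw [hQdef]
      intro h
      apply hP
      have h2 := congrArg (MvPolynomial.finSuccEquiv ℂ n).symm h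
      simpa using h2
    have hc : Q.leadingCoeff ≠ 0 := Polynomial.leadingCoeff_ne_zero.mpr hQ
    have IH := ih Q.leadingCoeff hc
    have hmeas2 : Measurable fun yz : (Fin n → ℂ) × ℂ =>
        MvPolynomial.eval (Fin.cons yz.2 yz.1 : Fin (n+1) → ℂ) P := by
      refine (measurable_eval P).comp ?_
      refine measurable_pi_iff.2 fun i => ?_
      refine Fin.cases ?_ (fun j => ?_) i
      · simpa using measurable_snd
      · simp only [Fin.cons_succ]; exact (measurable_pi_apply j).comp measurable_fst
    have hrel : ∀ yz : (Fin n → ℂ) × ℂ,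
        Polynomial.eval yz.2 (Q.map (MvPolynomial.eval yz.1)) =
          MvPolynomial.eval (Fin.cons yz.2 yz.1 : Fin (n+1) → ℂ) P := fun yz =>
      (MvPolynomial.eval_eq_eval_mv_eval' yz.1 yz.2 P).symm
    have hSm : MeasurableSet {yz : (Fin n → ℂ) × ℂ |
        MvPolynomial.eval (Fin.cons yz.2 yz.1 : Fin (n+1) → ℂ) P = 0} :=
      hmeas2 (measurableSet_singleton 0)
    have hnull : ((volume : Measure (Fin n → ℂ)).prod (volume : Measure ℂ))
        {yz : (Fin n → ℂ) × ℂ | MvPolynomial.eval (Fin.cons yz.2 yz.1 : Fin (n+1) → ℂ) P = 0}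
        = 0 := by
      rw [Measure.measure_prod_null hSm]
      filter_upwards [IH] with y hy
      have hmap : Q.map (MvPolynomial.eval y) ≠ 0 := by
        intro h
        apply hy
        rw [Polynomial.leadingCoeff, ← Polynomial.coeff_map, h, Polynomial.coeff_zero]
      have hpre : (Prod.mk y ⁻¹'
          {yz : (Fin n → ℂ) × ℂ |
            MvPolynomial.eval (Fin.cons yz.2 yz.1 : Fin (n+1) → ℂ) P = 0})
          = {z : ℂ | Polynomial.eval z (Q.map (MvPolynomial.eval y)) = 0} := by
        ext z
        simp only [Set.mem_preimage, Set.mem_setOf_eq, ← hrel (y, z)]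
      show (volume : Measure ℂ) (Prod.mk y ⁻¹' _) = _
      rw [hpre]
      simp only [Pi.zero_apply]
      exact (Polynomial.finite_setOf_isRoot hmap).measure_zero _
    have key : ∀ᵐ yz : (Fin n → ℂ) × ℂ
        ∂((volume : Measure (Fin n → ℂ)).prod (volume : Measure ℂ)),
        MvPolynomial.eval (Fin.cons yz.2 yz.1 : Fin (n+1) → ℂ) P ≠ 0 := by
      rw [Filter.eventually_iff, mem_ae_iff]
      have hcompl : {yz : (Fin n → ℂ) × ℂ |
          MvPolynomial.eval (Fin.cons yz.2 yz.1 : Fin (n+1) → ℂ) P ≠ 0}ᶜ =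
          {yz : (Fin n → ℂ) × ℂ |
            MvPolynomial.eval (Fin.cons yz.2 yz.1 : Fin (n+1) → ℂ) P = 0} := by
        ext yz; simp
      rw [hcompl]
      exact hnull
    have h1 : MeasurePreserving
        (⇑(MeasurableEquiv.piFinSuccAbove (fun _ : Fin (n+1) => ℂ) 0))
        (volume : Measure (Fin (n+1) → ℂ))
        ((volume : Measure ℂ).prod (volume : Measure (Fin n → ℂ))) :=
      measurePreserving_piFinSuccAbove (fun _ => (volume : Measure ℂ)) 0
    have h2 : MeasurePreserving (Prod.swap : ℂ × (Fin n → ℂ) → (Fin n → ℂ) × ℂ)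
        ((volume : Measure ℂ).prod (volume : Measure (Fin n → ℂ)))
        ((volume : Measure (Fin n → ℂ)).prod (volume : Measure ℂ)) :=
      Measure.measurePreserving_swap
    have htot := h2.comp h1
    have hpm : MeasurableSet {yz : (Fin n → ℂ) × ℂ |
        MvPolynomial.eval (Fin.cons yz.2 yz.1 : Fin (n+1) → ℂ) P ≠ 0} := by
      have hcompl : {yz : (Fin n → ℂ) × ℂ |
          MvPolynomial.eval (Fin.cons yz.2 yz.1 : Fin (n+1) → ℂ) P ≠ 0} =
          {yz : (Fin n → ℂ) × ℂ |
            MvPolynomial.eval (Fin.cons yz.2 yz.1 : Fin (n+1) → ℂ) P = 0}ᶜ := by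
        ext yz; simp
      rw [hcompl]
      exact hSm.compl
    have hres := mp_ae_comp htot hpm key
    filter_upwards [hres] with x hx
    have hswap : (Prod.swap ∘ ⇑(MeasurableEquiv.piFinSuccAbove (fun _ : Fin (n+1) => ℂ) 0)) x
        = (Fin.tail x, x 0) := by
      rw [Function.comp_apply, MeasurableEquiv.piFinSuccAbove_apply, Prod.swap_prod_mk]
      congr 1
    rw [hswap] at hx
    simpa [Fin.cons_self_tail] using hx

lemma ae_ne_zero {ι : Type} [Fintype ι] (P : MvPolynomial ι ℂ) (hP : P ≠ 0) :
    ∀ᵐ y : ι → ℂ ∂volume, MvPolynomial.eval y P ≠ 0 := by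
  classical
  set e := Fintype.equivFin ι with hedef
  have hP' : MvPolynomial.rename e P ≠ 0 := by
    intro h
    exact hP (MvPolynomial.rename_injective e e.injective (by simpa using h))
  have hmain := ae_ne_zero_fin _ (MvPolynomial.rename e P) hP'
  have hmp : MeasurePreserving
      (⇑(MeasurableEquiv.piCongrLeft (fun _ : Fin (Fintype.card ι) => ℂ) e))
      (volume : Measure (ι → ℂ)) (volume : Measure (Fin (Fintype.card ι) → ℂ)) :=
    volume_measurePreserving_piCongrLeft (fun _ : Fin (Fintype.card ι) => ℂ) e
  have hpm : MeasurableSet {y : Fin (Fintype.card ι) → ℂ |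
      MvPolynomial.eval y (MvPolynomial.rename e P) ≠ 0} := by
    have hcompl : {y : Fin (Fintype.card ι) → ℂ |
        MvPolynomial.eval y (MvPolynomial.rename e P) ≠ 0} =
        ((fun y => MvPolynomial.eval y (MvPolynomial.rename e P)) ⁻¹' {0})ᶜ := by
      ext y; simp
    rw [hcompl]
    exact (measurable_eval _ (measurableSet_singleton 0)).compl
  have hres := mp_ae_comp hmp hpm hmain
  filter_upwards [hres] with y hy
  rw [MvPolynomial.eval_rename] at hy
  have hcomp : ((MeasurableEquiv.piCongrLeft (fun _ : Fin (Fintype.card ι) => ℂ) e) y) ∘ ⇑e = y := by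
    funext b
    show (Equiv.piCongrLeft (fun _ => ℂ) e) y (e b) = y b
    exact Equiv.piCongrLeft_apply_apply (fun _ : Fin (Fintype.card ι) => ℂ) e y b
  rwa [hcomp] at hy

/-! ### Flattening nested pi types, measure preservingly -/

def sumFinEquiv (n : ℕ) (ι : Type) : (ι ⊕ (Fin n × ι)) ≃ (Fin (n+1) × ι) where
  toFun := Sum.elim (fun i => ((0 : Fin (n+1)), i)) (fun p => (p.1.succ, p.2))
  invFun := fun p => Fin.cases (Sum.inl p.2) (fun m' => Sum.inr (m', p.2)) p.1
  left_inv := by rintro (i | ⟨mm, i⟩) <;> simp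
  right_inv := by
    rintro ⟨mm, i⟩
    induction mm using Fin.cases <;> simp

lemma flat (Y : Type) [MeasureSpace Y] [SigmaFinite (volume : Measure Y)]
    (ι : Type) [Fintype ι] (f : Y → (ι → ℂ)) (hf : MeasurePreserving f volume volume) :
    ∀ n : ℕ, ∃ g : (Fin n → Y) → ((Fin n × ι) → ℂ),
      MeasurePreserving g volume volume ∧ ∀ x mm i, g x (mm, i) = f (x mm) i := by
  intro n
  induction n with
  | zero =>
    haveI : IsEmpty (Fin 0 × ι) := ⟨fun p => p.1.elim0⟩
    refine ⟨(⇑(MeasurableEquiv.ofUniqueOfUnique ((Fin 0 × ι) → ℂ) Unit).symm) ∘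
      (⇑(MeasurableEquiv.ofUniqueOfUnique (Fin 0 → Y) Unit)), ?_, ?_⟩
    · exact ((volume_preserving_pi_empty (fun _ : Fin 0 × ι => ℂ)).symm
        (MeasurableEquiv.ofUniqueOfUnique ((Fin 0 × ι) → ℂ) Unit)).comp
        (volume_preserving_pi_empty (fun _ : Fin 0 => Y))
    · exact fun x mm i => mm.elim0
  | succ n ih =>
    obtain ⟨g, hg, hgprop⟩ := ih
    set E := sumFinEquiv n ι with hEdef
    set F : (Fin (n+1) → Y) → ((Fin (n+1) × ι) → ℂ) :=
      (⇑(MeasurableEquiv.piCongrLeft (fun _ : Fin (n+1) × ι => ℂ) E)) ∘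
      (⇑(MeasurableEquiv.sumPiEquivProdPi (fun _ : ι ⊕ (Fin n × ι) => ℂ)).symm) ∘
      (Prod.map f g) ∘
      (⇑(MeasurableEquiv.piFinSuccAbove (fun _ : Fin (n+1) => Y) 0)) with hFdef
    refine ⟨F, ?_, ?_⟩
    · have h1 : MeasurePreserving
          (⇑(MeasurableEquiv.piFinSuccAbove (fun _ : Fin (n+1) => Y) 0))
          (volume : Measure (Fin (n+1) → Y))
          ((volume : Measure Y).prod (volume : Measure (Fin n → Y))) :=
        measurePreserving_piFinSuccAbove (fun _ => (volume : Measure Y)) 0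
      have h2 : MeasurePreserving (Prod.map f g)
          ((volume : Measure Y).prod (volume : Measure (Fin n → Y)))
          ((volume : Measure (ι → ℂ)).prod (volume : Measure ((Fin n × ι) → ℂ))) :=
        hf.prod hg
      have h3 : MeasurePreserving
          (⇑(MeasurableEquiv.sumPiEquivProdPi (fun _ : ι ⊕ (Fin n × ι) => ℂ)).symm)
          ((volume : Measure (ι → ℂ)).prod (volume : Measure ((Fin n × ι) → ℂ)))
          (volume : Measure ((ι ⊕ (Fin n × ι)) → ℂ)) :=
        volume_measurePreserving_sumPiEquivProdPi_symm _
      have h4 : MeasurePreserving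
          (⇑(MeasurableEquiv.piCongrLeft (fun _ : Fin (n+1) × ι => ℂ) E))
          (volume : Measure ((ι ⊕ (Fin n × ι)) → ℂ))
          (volume : Measure ((Fin (n+1) × ι) → ℂ)) :=
        volume_measurePreserving_piCongrLeft (fun _ : Fin (n+1) × ι => ℂ) E
      exact ((h4.comp h3).comp h2).comp h1
    · intro x mm i
      have hstep : ((Prod.map f g)
          ((MeasurableEquiv.piFinSuccAbove (fun _ : Fin (n+1) => Y) 0) x)) =
          (f (x 0), g (fun j => x ((0 : Fin (n+1)).succAbove j))) := by
        rw [MeasurableEquiv.piFinSuccAbove_apply]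
        rfl
      have key : ∀ b : ι ⊕ (Fin n × ι), F x (E b) =
          Sum.elim (f (x 0)) (g (fun j => x ((0 : Fin (n+1)).succAbove j))) b := by
        intro b
        show (Equiv.piCongrLeft (fun _ => ℂ) E)
          ((Equiv.sumPiEquivProdPi (fun _ : ι ⊕ (Fin n × ι) => ℂ)).symm
            ((Prod.map f g) ((MeasurableEquiv.piFinSuccAbove (fun _ : Fin (n+1) => Y) 0) x)))
            (E b) = _
        rw [Equiv.piCongrLeft_apply_apply, hstep]
        cases b with
        | inl i => rfl
        | inr p => rfl
      refine Fin.cases ?_ (fun mm' => ?_) mm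
      · have hkey := key (Sum.inl i)
        have hE : E (Sum.inl i) = ((0 : Fin (n+1)), i) := rfl
        rw [hE] at hkey
        simpa using hkey
      · have hkey := key (Sum.inr (mm', i))
        have hE : E (Sum.inr (mm', i)) = (mm'.succ, i) := rfl
        rw [hE] at hkey
        rw [hkey]
        simp only [Sum.elim_inr]
        rw [hgprop]
        rfl

/-! ### The block-Vandermonde determinant -/

lemma mod_cast_inj (Kt s : ℕ) (hsK : s ≤ Kt) (off : ℕ) {a b : ℕ} (ha : a < s) (hb : b < s)
    (h : (((off + a) % Kt : ℕ) : ℂ) = (((off + b) % Kt : ℕ) : ℂ)) : a = b := by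
  have h' : (off + a) % Kt = (off + b) % Kt := Nat.cast_injective h
  have hmod : a % Kt = b % Kt :=
    Nat.ModEq.add_left_cancel' off (h' : (off + a) ≡ (off + b) [MOD Kt])
  rwa [Nat.mod_eq_of_lt (lt_of_lt_of_le ha hsK), Nat.mod_eq_of_lt (lt_of_lt_of_le hb hsK)] at hmod

def Wmat (Kt s off m : ℕ) : Matrix (Fin m) (Fin m) ℂ :=
  Matrix.of fun p q => if (p : ℕ) / s = (q : ℕ) / s
    then ((((off + (q : ℕ)) % Kt : ℕ)) : ℂ) ^ ((p : ℕ) % s) else 0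

lemma det_vandermonde_block (Kt s : ℕ) (hs : 0 < s) (hsK : s ≤ Kt) (off m : ℕ) (hm : m ≤ s) :
    (Wmat Kt s off m).det ≠ 0 := by
  have hW : Wmat Kt s off m =
      (Matrix.vandermonde fun q : Fin m => ((((off + (q : ℕ)) % Kt : ℕ)) : ℂ))ᵀ := by
    ext p q
    have hp : (p : ℕ) < s := lt_of_lt_of_le p.2 hm
    have hq : (q : ℕ) < s := lt_of_lt_of_le q.2 hm
    simp [Wmat, Matrix.vandermonde, Matrix.transpose_apply, Nat.div_eq_of_lt hp,
      Nat.div_eq_of_lt hq, Nat.mod_eq_of_lt hp]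
  rw [hW, Matrix.det_transpose, Matrix.det_vandermonde]
  refine Finset.prod_ne_zero_iff.mpr fun i _ => Finset.prod_ne_zero_iff.mpr fun j hj => ?_
  rw [Finset.mem_Ioi] at hj
  refine sub_ne_zero_of_ne fun h => ?_
  have := mod_cast_inj Kt s hsK off (lt_of_lt_of_le j.2 hm) (lt_of_lt_of_le i.2 hm) h
  exact absurd (Fin.val_injective this) hj.ne'

lemma det_Wmat_ne_zero (Kt s : ℕ) (hs : 0 < s) (hsK : s ≤ Kt) :
    ∀ (G m off : ℕ), m ≤ s * G → (Wmat Kt s off m).det ≠ 0 := by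
  intro G
  induction G with
  | zero =>
    intro m off hm
    have hm0 : m = 0 := by omega
    subst hm0
    simp [Matrix.det_isEmpty]
  | succ G ih =>
    intro m off hm
    rcases le_or_gt m s with hms | hsm
    · exact det_vandermonde_block Kt s hs hsK off m hms
    · have hsm' : s ≤ m := hsm.le
      set e : Fin s ⊕ Fin (m - s) ≃ Fin m :=
        finSumFinEquiv.trans (finCongr (by omega)) with hedef
      have hdet : (Wmat Kt s off m).det = ((Wmat Kt s off m).submatrix e e).det :=
        (Matrix.det_submatrix_equiv_self e _).symm
      have heL : ∀ i : Fin s, ((e (Sum.inl i) : Fin m) : ℕ) = (i : ℕ) := by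
        intro i; simp [hedef]
      have heR : ∀ i : Fin (m - s), ((e (Sum.inr i) : Fin m) : ℕ) = s + (i : ℕ) := by
        intro i; simp [hedef]
      have hblock : (Wmat Kt s off m).submatrix e e =
          Matrix.fromBlocks (Wmat Kt s off s) 0 0 (Wmat Kt s (off + s) (m - s)) := by
        ext i j
        rcases i with i | i <;> rcases j with j | j
        · show Wmat Kt s off m (e (Sum.inl i)) (e (Sum.inl j)) = Wmat Kt s off s i j
          simp only [Wmat, Matrix.of_apply, heL]
        · show Wmat Kt s off m (e (Sum.inl i)) (e (Sum.inr j)) = 0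
          have h1 : ((e (Sum.inl i) : Fin m) : ℕ) / s = 0 := by
            rw [heL]; exact Nat.div_eq_of_lt i.2
          have h2 : ((e (Sum.inr j) : Fin m) : ℕ) / s ≠ 0 := by
            rw [heR, Nat.add_comm, Nat.add_div_right _ hs]; exact Nat.succ_ne_zero _
          simp only [Wmat, Matrix.of_apply]
          rw [if_neg]
          rw [h1]
          exact fun h => h2 h.symm
        · show Wmat Kt s off m (e (Sum.inr i)) (e (Sum.inl j)) = 0
          have h1 : ((e (Sum.inl j) : Fin m) : ℕ) / s = 0 := by
            rw [heL]; exact Nat.div_eq_of_lt j.2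
          have h2 : ((e (Sum.inr i) : Fin m) : ℕ) / s ≠ 0 := by
            rw [heR, Nat.add_comm, Nat.add_div_right _ hs]; exact Nat.succ_ne_zero _
          simp only [Wmat, Matrix.of_apply]
          rw [if_neg]
          rw [h1]
          exact fun h => h2 h
        · show Wmat Kt s off m (e (Sum.inr i)) (e (Sum.inr j)) =
            Wmat Kt s (off + s) (m - s) i j
          have hdiv : ∀ a : ℕ, (s + a) / s = a / s + 1 := fun a => by
            rw [Nat.add_comm s a, Nat.add_div_right _ hs]
          have hmod : ∀ a : ℕ, (s + a) % s = a % s := fun a => Nat.add_mod_left s a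
          simp only [Wmat, Matrix.of_apply, heR, hdiv, hmod]
          have harith : off + (s + (j : ℕ)) = off + s + (j : ℕ) := by omega
          rw [harith]
          simp only [Nat.add_right_cancel_iff]
      rw [hdet, hblock, Matrix.det_fromBlocks_zero₂₁]
      exact mul_ne_zero (det_vandermonde_block Kt s hs hsK off s le_rfl)
        (ih (m - s) (off + s) (by
          have hx : s * (G + 1) = s * G + s := by ring
          omega))

/-! ### Rank lower bound from an invertible square submatrix -/

lemma rank_ge_of_submatrix {m' n' : Type*} [Fintype m'] [Fintype n'] [DecidableEq n']
    (A : Matrix m' n' ℂ) {m : ℕ} (σ : Fin m → m') (τ : Fin m → n')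
    (h : (A.submatrix σ τ).det ≠ 0) : m ≤ A.rank := by
  classical
  set u : Fin m → (m' → ℂ) := fun q => A.mulVecLin (Pi.single (τ q) 1) with hudef
  have hli : LinearIndependent ℂ u := by
    rw [Fintype.linearIndependent_iff]
    intro g hg
    have hg' : ∀ i : m', ∑ q, g q * A i (τ q) = 0 := by
      intro i
      have hgi := congrFun hg i
      simpa [hudef, Matrix.mulVecLin_apply, Matrix.mulVec_single, Finset.sum_apply,
        mul_comm] using hgi
    set S := A.submatrix σ τ with hSdef
    have hSv : S.mulVec g = 0 := by
      funext p
      simpa [hSdef, Matrix.mulVec, dotProduct, mul_comm] using hg' (σ p)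
    have hunit : IsUnit S.det := isUnit_iff_ne_zero.mpr h
    have hzero : g = 0 := by
      calc g = (1 : Matrix (Fin m) (Fin m) ℂ) *ᵥ g := (Matrix.one_mulVec g).symm
        _ = (S⁻¹ * S) *ᵥ g := by rw [Matrix.nonsing_inv_mul S hunit]
        _ = S⁻¹ *ᵥ (S *ᵥ g) := by rw [← Matrix.mulVec_mulVec]
        _ = 0 := by rw [hSv, Matrix.mulVec_zero]
    exact fun q => congrFun hzero q
  have hsub : Submodule.span ℂ (Set.range u) ≤ LinearMap.range A.mulVecLin := by
    rw [Submodule.span_le]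
    rintro _ ⟨q, rfl⟩
    exact LinearMap.mem_range_self _ _
  have h1 : m = Module.finrank ℂ (Submodule.span ℂ (Set.range u)) := by
    rw [finrank_span_eq_card hli, Fintype.card_fin]
  rw [h1]
  exact Submodule.finrank_mono hsub

end Stmt6Aux

open Stmt6Aux in
/-- For positive integers `K_r, K_t, M_r, N_t, κ_t` with
`1 ≤ κ_t < K_t` and `N_t ≤ K_r M_r`, Lebesgue-almost every choice of the
matrices `H_{jk}` and scalars `γ^j_{ik}` makes the coefficient matrix `C` of
full rank, i.e. `rank C = min (K_r (K_t − κ_t) M_r) (K_t N_t)`. -/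
theorem stmt6 (Kr Kt Mr Nt κt : ℕ) (hKr : 0 < Kr) (hMr : 0 < Mr) (hNt : 0 < Nt)
    (hκ1 : 1 ≤ κt) (hκ2 : κt < Kt) (hN : Nt ≤ Kr * Mr) :
    ∀ᵐ p : (Fin Kr → Fin Kt → Fin Mr → Fin Nt → ℂ) ×
        (Fin Kr → Fin (Kt - κt) → Fin Kt → ℂ)
      ∂((volume : Measure (Fin Kr → Fin Kt → Fin Mr → Fin Nt → ℂ)).prod
        (volume : Measure (Fin Kr → Fin (Kt - κt) → Fin Kt → ℂ))),
      (coefMatrix Kr Kt κt Mr Nt (fun j k => Matrix.of (p.1 j k)) p.2).rank =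
        min (Kr * (Kt - κt) * Mr) (Kt * Nt) := by
  classical
  set s := Kt - κt with hsdef
  have hs : 0 < s := by omega
  have hKt : 0 < Kt := by omega
  have hsK : s ≤ Kt := by omega
  set m := min (Kr * s * Mr) (Kt * Nt) with hmdef
  have hm1 : m ≤ Kr * s * Mr := min_le_left _ _
  have hm2 : m ≤ Kt * Nt := min_le_right _ _
  have hj : ∀ p : Fin m, (p : ℕ) / s / Mr < Kr := by
    intro p
    have hp : (p : ℕ) < Kr * Mr * s := by
      have h := lt_of_lt_of_le p.2 hm1
      calc (p : ℕ) < Kr * s * Mr := h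
        _ = Kr * Mr * s := by ring
    have h1 : (p : ℕ) / s < Kr * Mr := (Nat.div_lt_iff_lt_mul hs).mpr hp
    exact (Nat.div_lt_iff_lt_mul hMr).mpr h1
  have hu : ∀ p : Fin m, (p : ℕ) % s < s := fun p => Nat.mod_lt _ hs
  have hr : ∀ p : Fin m, (p : ℕ) / s % Mr < Mr := fun p => Nat.mod_lt _ hMr
  have hk : ∀ q : Fin m, (q : ℕ) % Kt < Kt := fun q => Nat.mod_lt _ hKt
  have hc : ∀ q : Fin m, (q : ℕ) / Kt < Nt := by
    intro q
    refine (Nat.div_lt_iff_lt_mul hKt).mpr ?_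
    calc (q : ℕ) < Kt * Nt := lt_of_lt_of_le q.2 hm2
      _ = Nt * Kt := by ring
  -- row and column selections
  set σF : Fin m → (Fin Kr × Fin s) × Fin Mr :=
    fun p => ((⟨(p : ℕ) / s / Mr, hj p⟩, ⟨(p : ℕ) % s, hu p⟩), ⟨(p : ℕ) / s % Mr, hr p⟩)
    with hσdef
  set τF : Fin m → Fin Kt × Fin Nt :=
    fun q => (⟨(q : ℕ) % Kt, hk q⟩, ⟨(q : ℕ) / Kt, hc q⟩) with hτdef
  -- the generic determinant polynomial
  set M : Matrix (Fin m) (Fin m)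
      (MvPolynomial ((Fin Kr × (Fin Kt × (Fin Mr × Fin Nt))) ⊕ (Fin Kr × (Fin s × Fin Kt))) ℂ) :=
    Matrix.of fun p q =>
      MvPolynomial.X (Sum.inr ((σF p).1.1, ((σF p).1.2, (τF q).1))) *
      MvPolynomial.X (Sum.inl ((σF p).1.1, ((τF q).1, ((σF p).2, (τF q).2))))
    with hMdef
  set P : MvPolynomial
      ((Fin Kr × (Fin Kt × (Fin Mr × Fin Nt))) ⊕ (Fin Kr × (Fin s × Fin Kt))) ℂ :=
    M.det with hPdef
  have heval : ∀ y, MvPolynomial.eval y P =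
      (Matrix.of fun p q : Fin m =>
        y (Sum.inr ((σF p).1.1, ((σF p).1.2, (τF q).1))) *
        y (Sum.inl ((σF p).1.1, ((τF q).1, ((σF p).2, (τF q).2))))).det := by
    intro y
    rw [hPdef, RingHom.map_det]
    congr 1
    ext p q
    simp [hMdef, RingHom.mapMatrix_apply, Matrix.map_apply]
  -- the witness shows P ≠ 0
  have hPne : P ≠ 0 := by
    intro hP0
    set w : ((Fin Kr × (Fin Kt × (Fin Mr × Fin Nt))) ⊕ (Fin Kr × (Fin s × Fin Kt))) → ℂ :=
      Sum.elim
        (fun t => if ((t.2.2.2 : ℕ) * Kt + (t.2.1 : ℕ) < m ∧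
            ((t.2.2.2 : ℕ) * Kt + (t.2.1 : ℕ)) / s / Mr = (t.1 : ℕ) ∧
            ((t.2.2.2 : ℕ) * Kt + (t.2.1 : ℕ)) / s % Mr = (t.2.2.1 : ℕ)) then 1 else 0)
        (fun t => ((t.2.2 : ℕ) : ℂ) ^ (t.2.1 : ℕ))
      with hwdef
    have hW : MvPolynomial.eval w P = (Wmat Kt s 0 m).det := by
      rw [heval w]
      congr 1
      ext p q
      have hq : ((q : ℕ) / Kt) * Kt + (q : ℕ) % Kt = (q : ℕ) := by
        rw [Nat.mul_comm]
        exact Nat.div_add_mod _ _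
      show w (Sum.inr _) * w (Sum.inl _) = Wmat Kt s 0 m p q
      rw [hwdef]
      simp only [Sum.elim_inl, Sum.elim_inr]
      by_cases hgr : (p : ℕ) / s = (q : ℕ) / s
      · have hcond : (((τF q).2 : ℕ) * Kt + ((τF q).1 : ℕ) < m ∧
            (((τF q).2 : ℕ) * Kt + ((τF q).1 : ℕ)) / s / Mr = (((σF p).1.1 : Fin Kr) : ℕ) ∧
            (((τF q).2 : ℕ) * Kt + ((τF q).1 : ℕ)) / s % Mr = (((σF p).2 : Fin Mr) : ℕ)) := by
          show ((q : ℕ) / Kt) * Kt + (q : ℕ) % Kt < m ∧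
            (((q : ℕ) / Kt) * Kt + (q : ℕ) % Kt) / s / Mr = (p : ℕ) / s / Mr ∧
            (((q : ℕ) / Kt) * Kt + (q : ℕ) % Kt) / s % Mr = (p : ℕ) / s % Mr
          rw [hq]
          exact ⟨q.2, by rw [hgr], by rw [hgr]⟩
        rw [if_pos hcond]
        show ((((q : ℕ) % Kt : ℕ)) : ℂ) ^ ((p : ℕ) % s) * 1 = Wmat Kt s 0 m p q
        rw [mul_one, Wmat, Matrix.of_apply, if_pos hgr, Nat.zero_add]
      · have hcond : ¬ (((τF q).2 : ℕ) * Kt + ((τF q).1 : ℕ) < m ∧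
            (((τF q).2 : ℕ) * Kt + ((τF q).1 : ℕ)) / s / Mr = (((σF p).1.1 : Fin Kr) : ℕ) ∧
            (((τF q).2 : ℕ) * Kt + ((τF q).1 : ℕ)) / s % Mr = (((σF p).2 : Fin Mr) : ℕ)) := by
          show ¬ (((q : ℕ) / Kt) * Kt + (q : ℕ) % Kt < m ∧
            (((q : ℕ) / Kt) * Kt + (q : ℕ) % Kt) / s / Mr = (p : ℕ) / s / Mr ∧
            (((q : ℕ) / Kt) * Kt + (q : ℕ) % Kt) / s % Mr = (p : ℕ) / s % Mr)
          rw [hq]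
          rintro ⟨-, h1, h2⟩
          apply hgr
          have hp' : (p : ℕ) / s = Mr * ((p : ℕ) / s / Mr) + (p : ℕ) / s % Mr :=
            (Nat.div_add_mod _ _).symm
          have hq' : (q : ℕ) / s = Mr * ((q : ℕ) / s / Mr) + (q : ℕ) / s % Mr :=
            (Nat.div_add_mod _ _).symm
          rw [hp', hq', h1, h2]
        rw [if_neg hcond]
        show ((((q : ℕ) % Kt : ℕ)) : ℂ) ^ ((p : ℕ) % s) * 0 = Wmat Kt s 0 m p q
        rw [mul_zero, Wmat, Matrix.of_apply, if_neg hgr]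
    have hWd : (Wmat Kt s 0 m).det ≠ 0 := by
      refine det_Wmat_ne_zero Kt s hs hsK (Kr * Mr) m 0 ?_
      calc m ≤ Kr * s * Mr := hm1
        _ = s * (Kr * Mr) := by ring
    rw [hP0] at hW
    simp only [map_zero] at hW
    exact hWd hW.symm
  -- measure preserving flattening
  haveI i2 : SigmaFinite (volume : Measure (Fin Mr → Fin Nt → ℂ)) := inferInstance
  haveI i3 : SigmaFinite (volume : Measure (Fin Kt → Fin Mr → Fin Nt → ℂ)) := inferInstance
  haveI i4 : SigmaFinite (volume : Measure (Fin s → Fin Kt → ℂ)) := inferInstance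
  obtain ⟨g1, hg1, hg1p⟩ := flat (Fin Nt → ℂ) (Fin Nt) id (MeasurePreserving.id _) Mr
  obtain ⟨g2, hg2, hg2p⟩ := flat (Fin Mr → Fin Nt → ℂ) (Fin Mr × Fin Nt) g1 hg1 Kt
  obtain ⟨g3, hg3, hg3p⟩ :=
    flat (Fin Kt → Fin Mr → Fin Nt → ℂ) (Fin Kt × (Fin Mr × Fin Nt)) g2 hg2 Kr
  obtain ⟨g4, hg4, hg4p⟩ := flat (Fin Kt → ℂ) (Fin Kt) id (MeasurePreserving.id _) s
  obtain ⟨g5, hg5, hg5p⟩ := flat (Fin s → Fin Kt → ℂ) (Fin s × Fin Kt) g4 hg4 Kr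
  set Φ : ((Fin Kr → Fin Kt → Fin Mr → Fin Nt → ℂ) ×
      (Fin Kr → Fin s → Fin Kt → ℂ)) →
      (((Fin Kr × (Fin Kt × (Fin Mr × Fin Nt))) ⊕ (Fin Kr × (Fin s × Fin Kt))) → ℂ) :=
    (⇑(MeasurableEquiv.sumPiEquivProdPi
      (fun _ : (Fin Kr × (Fin Kt × (Fin Mr × Fin Nt))) ⊕ (Fin Kr × (Fin s × Fin Kt)) => ℂ)).symm) ∘
      (Prod.map g3 g5)
    with hΦdef
  have hΦ : MeasurePreserving Φ
      ((volume : Measure (Fin Kr → Fin Kt → Fin Mr → Fin Nt → ℂ)).prod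
        (volume : Measure (Fin Kr → Fin s → Fin Kt → ℂ)))
      (volume : Measure
        (((Fin Kr × (Fin Kt × (Fin Mr × Fin Nt))) ⊕ (Fin Kr × (Fin s × Fin Kt))) → ℂ)) :=
    (volume_measurePreserving_sumPiEquivProdPi_symm _).comp (hg3.prod hg5)
  have hΦH : ∀ x (j : Fin Kr) (k : Fin Kt) (r : Fin Mr) (c : Fin Nt),
      Φ x (Sum.inl (j, (k, (r, c)))) = x.1 j k r c := by
    intro x j k r c
    show g3 x.1 (j, (k, (r, c))) = x.1 j k r c
    rw [hg3p, hg2p, hg1p]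
    rfl
  have hΦγ : ∀ x (j : Fin Kr) (i : Fin s) (k : Fin Kt),
      Φ x (Sum.inr (j, (i, k))) = x.2 j i k := by
    intro x j i k
    show g5 x.2 (j, (i, k)) = x.2 j i k
    rw [hg5p, hg4p]
    rfl
  -- a.e. nonvanishing
  have hae0 := ae_ne_zero P hPne
  have hmeasset : MeasurableSet {y :
      ((Fin Kr × (Fin Kt × (Fin Mr × Fin Nt))) ⊕ (Fin Kr × (Fin s × Fin Kt))) → ℂ |
      MvPolynomial.eval y P ≠ 0} := by
    have hcompl : {y : ((Fin Kr × (Fin Kt × (Fin Mr × Fin Nt))) ⊕ (Fin Kr × (Fin s × Fin Kt))) → ℂ |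
        MvPolynomial.eval y P ≠ 0} =
        ((fun y => MvPolynomial.eval y P) ⁻¹' {0})ᶜ := by ext y; simp
    rw [hcompl]
    exact (measurable_eval P (measurableSet_singleton 0)).compl
  have hae := mp_ae_comp hΦ hmeasset hae0
  filter_upwards [hae] with x hx
  set A := coefMatrix Kr Kt κt Mr Nt (fun j k => Matrix.of (x.1 j k)) x.2 with hAdef
  have hsubdet : (A.submatrix σF τF).det ≠ 0 := by
    have hmat : (Matrix.of fun p q : Fin m =>
        Φ x (Sum.inr ((σF p).1.1, ((σF p).1.2, (τF q).1))) *
        Φ x (Sum.inl ((σF p).1.1, ((τF q).1, ((σF p).2, (τF q).2))))) =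
        A.submatrix σF τF := by
      ext p q
      rw [Matrix.of_apply, hΦH, hΦγ]
      rfl
    rw [Set.mem_setOf_eq, heval (Φ x), hmat] at hx
    exact hx
  have hge : m ≤ A.rank := rank_ge_of_submatrix A σF τF hsubdet
  have hle1 : A.rank ≤ Kr * s * Mr := by
    have h := A.rank_le_card_height
    simpa [Fintype.card_prod, Nat.mul_assoc] using h
  have hle2 : A.rank ≤ Kt * Nt := by
    have h := A.rank_le_card_width
    simpa [Fintype.card_prod] using h
  exact le_antisymm (le_min hle1 hle2) hge
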